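/- There exists a constant C > 0 such that for every real k ≥ 1, all positive integers m, r with r ≤ m, and all integers α, β with 1 ≤ β ≤ α/2 ≤ r/2, the following holds. If k² ≥ mr, then N(α,β) ≤ 2^{C·r} · (k²r/m)^{r/2}. If k² < mr, then N(α,β) ≤ 2^{C·r} · max{ M(α,β) , (r / ln(emr/k²))^{r} }. -/

import Mathlib

set_option maxHeartbeats 2000000


open scoped BigOperators
noncomputable section

namespace FH

/-- `M(α,β) = (m/β)^β · (kα/m)^α · (α−2β)^{2r−2α}` (with `0⁰ = 1`). -/
def Mfun (m r : ℕ) (k : ℝ) (α β : ℕ) : ℝ :=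
  ((m:ℝ)/β)^β * (k*α/m)^α * ((α:ℝ) - 2*β)^(2*r - 2*α)

/-- `N(α,β) = (m/β)^β · (kα/m)^α · (α−β)^{r−α}`. -/
def Nfun (m r : ℕ) (k : ℝ) (α β : ℕ) : ℝ :=
  ((m:ℝ)/β)^β * (k*α/m)^α * ((α:ℝ) - β)^(r - α)

/-- `(y/b)^b ≤ exp y` for `1 ≤ b`, `b ≤ y`. -/
lemma aux_pow_le_exp (b : ℕ) (hb1 : 1 ≤ b) (y : ℝ) (hy : (b:ℝ) ≤ y) :
    (y/(b:ℝ))^b ≤ Real.exp y := by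
  have hb0 : (0:ℝ) < b := by exact_mod_cast hb1
  have hy0' : 0 < y := lt_of_lt_of_le hb0 hy
  have hq : 0 < y / b := by positivity
  have h1 : (y/(b:ℝ))^b = Real.exp ((b:ℝ) * Real.log (y/b)) := by
    rw [Real.exp_nat_mul, Real.exp_log hq]
  rw [h1]
  apply Real.exp_le_exp.mpr
  have h2 : Real.log (y/b) ≤ y/b := le_trans (Real.log_le_sub_one_of_pos hq) (by linarith)
  calc (b:ℝ) * Real.log (y/b) ≤ (b:ℝ) * (y/b) := by
        exact mul_le_mul_of_nonneg_left h2 hb0.le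
    _ = y := by field_simp

/-- `L^(2r) ≤ (2r/A)^(2r) * exp(A*L)` for `L > 0`, `0 < A`. -/
lemma aux_logpow (r : ℕ) (hr : 0 < r) (L A : ℝ) (hL : 0 < L) (hA : 0 < A) :
    L^(2*r) ≤ ((2*(r:ℝ))/A)^(2*r) * Real.exp (A * L) := by
  have hR0 : (0:ℝ) < r := by exact_mod_cast hr
  have hq : 0 < 2*(r:ℝ)/A := by positivity
  have key : Real.log L ≤ Real.log (2*(r:ℝ)/A) + (A/(2*(r:ℝ))) * L := by
    have hc : 0 < A/(2*(r:ℝ)) := by positivity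
    have h1 : Real.log ((A/(2*(r:ℝ))) * L) ≤ (A/(2*(r:ℝ))) * L :=
      le_trans (Real.log_le_sub_one_of_pos (by positivity)) (by linarith [mul_pos hc hL])
    rw [Real.log_mul (ne_of_gt hc) (ne_of_gt hL)] at h1
    have h2 : Real.log (2*(r:ℝ)/A) = - Real.log (A/(2*(r:ℝ))) := by
      rw [← Real.log_inv]; congr 1; rw [inv_div]
    linarith
  have h3 : L^(2*r) = Real.exp ((2*r:ℕ) * Real.log L) := by
    rw [Real.exp_nat_mul, Real.exp_log hL]
  have h4 : ((2*(r:ℝ))/A)^(2*r) * Real.exp (A*L)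
      = Real.exp ((2*r:ℕ) * (Real.log (2*(r:ℝ)/A) + (A/(2*(r:ℝ))) * L)) := by
    have he : ((2*r:ℕ):ℝ) * (A/(2*(r:ℝ)) * L) = A * L := by
      push_cast; field_simp
    rw [mul_add, Real.exp_add, Real.exp_nat_mul, Real.exp_log hq, he]
  rw [h3, h4]
  apply Real.exp_le_exp.mpr
  apply mul_le_mul_of_nonneg_left key (by positivity)

theorem Nfun_bound :
    ∃ C : ℝ, 0 < C ∧
      ∀ k : ℝ, 1 ≤ k → ∀ m r : ℕ, 0 < m → 0 < r → r ≤ m →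
        ∀ α β : ℕ, 1 ≤ β → 2*β ≤ α → α ≤ r →
          (((m:ℝ) * r ≤ k^2 →
            Nfun m r k α β ≤ (2:ℝ)^(C * r) * (k^2 * r / m)^((r:ℝ)/2)) ∧
          (k^2 < (m:ℝ) * r →
            Nfun m r k α β ≤ (2:ℝ)^(C * r) *
              max (Mfun m r k α β)
                (((r:ℝ) / Real.log (Real.exp 1 * m * r / k^2))^r))) := by
  have hlog2 : 0 < Real.log 2 := Real.log_pos one_lt_two
  refine ⟨20 / Real.log 2, by positivity, ?_⟩
  intro k hk m r hm hr hrm α β hβ h2β hαr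
  have hk0 : (0:ℝ) < k := lt_of_lt_of_le one_pos hk
  have hm0 : (0:ℝ) < m := by exact_mod_cast hm
  have hr0 : (0:ℝ) < r := by exact_mod_cast hr
  have hβ0 : (0:ℝ) < β := by exact_mod_cast hβ
  have hα1 : 1 ≤ α := by omega
  have hα0 : (0:ℝ) < α := by exact_mod_cast hα1
  have h2βα : 2*(β:ℝ) ≤ α := by exact_mod_cast h2β
  have hβα : (β:ℝ) ≤ α := by linarith
  have hαR : (α:ℝ) ≤ r := by exact_mod_cast hαr
  have hRM : (r:ℝ) ≤ m := by exact_mod_cast hrm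
  have hβR : (β:ℝ) ≤ r := by linarith
  have hβr : β ≤ r := by omega
  have hC2 : (2:ℝ)^((20/Real.log 2) * r) = Real.exp (20*r) := by
    rw [Real.rpow_def_of_pos two_pos]
    congr 1
    field_simp
  have hABnn : (0:ℝ) ≤ (α:ℝ) - β := by linarith
  have hA2Bnn : (0:ℝ) ≤ (α:ℝ) - 2*β := by linarith
  have hNnn : 0 ≤ Nfun m r k α β := by
    unfold Nfun
    exact mul_nonneg (mul_nonneg (by positivity) (by positivity)) (pow_nonneg hABnn _)
  constructor
  · -- Case 1 : m*r ≤ k^2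
    intro hcase
    rw [hC2]
    set P := k^2 * (r:ℝ) / m with hPdef
    have hP0 : 0 < P := by positivity
    set T := Real.sqrt P with hTdef
    have hT0 : 0 ≤ T := Real.sqrt_nonneg _
    have hT2 : T^2 = P := Real.sq_sqrt hP0.le
    have hRT : (r:ℝ) ≤ T := by
      refine (Real.le_sqrt hr0.le hP0.le).mpr ?_
      rw [hPdef, le_div_iff₀ hm0]
      nlinarith
    have hkT : k * α / m ≤ T := by
      refine (Real.le_sqrt (by positivity) hP0.le).mpr ?_
      rw [hPdef, div_pow, div_le_div_iff₀ (by positivity) hm0]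
      have hA2 : (α:ℝ)^2 ≤ r * m := by nlinarith
      nlinarith [mul_le_mul_of_nonneg_left hA2 (show (0:ℝ) ≤ k^2 * m by positivity)]
    have hABT : (α:ℝ) - β ≤ T := by linarith
    have key1 : (m:ℝ)/β * (k*α/m)^2 ≤ ((r:ℝ)/β) * T^2 := by
      rw [hT2, hPdef]
      have e1 : (m:ℝ)/β * (k*α/m)^2 = k^2*(α:ℝ)^2/(β*m) := by field_simp
      have e2 : ((r:ℝ)/β) * (k^2*r/m) = k^2*(r:ℝ)^2/(β*m) := by field_simp
      rw [e1, e2]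
      gcongr
      all_goals first | exact hαR | exact hα0.le | positivity
    have hexp1 : 2*β + (α - 2*β) = α := by omega
    have hexp2 : 2*β + ((α - 2*β) + (r - α)) = r := by omega
    calc Nfun m r k α β
        = ((m:ℝ)/β * (k*α/m)^2)^β * ((k*α/m)^(α-2*β) * ((α:ℝ)-β)^(r-α)) := by
          unfold Nfun
          rw [show (k*(α:ℝ)/m)^α = (k*(α:ℝ)/m)^(2*β) * (k*(α:ℝ)/m)^(α-2*β) by
            rw [← pow_add, hexp1]]
          ring
      _ ≤ ((r:ℝ)/β * T^2)^β * (T^(α-2*β) * T^(r-α)) := by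
          apply mul_le_mul
          · exact pow_le_pow_left₀ (by positivity) key1 β
          · exact mul_le_mul (pow_le_pow_left₀ (by positivity) hkT _)
              (pow_le_pow_left₀ hABnn hABT _) (pow_nonneg hABnn _) (pow_nonneg hT0 _)
          · exact mul_nonneg (by positivity) (pow_nonneg hABnn _)
          · positivity
      _ = ((r:ℝ)/β)^β * T^r := by
          rw [mul_pow, ← pow_mul, mul_assoc, ← pow_add, ← pow_add, hexp2]
      _ ≤ Real.exp (r:ℝ) * T^r := by
          exact mul_le_mul_of_nonneg_right (aux_pow_le_exp β hβ r hβR) (pow_nonneg hT0 _)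
      _ ≤ Real.exp (20*r) * (k^2 * (r:ℝ) / m)^((r:ℝ)/2) := by
          have hTr : T^r = (k^2*(r:ℝ)/m)^((r:ℝ)/2) := by
            rw [hTdef, ← Real.rpow_natCast (Real.sqrt P) r, Real.sqrt_eq_rpow,
              ← Real.rpow_mul hP0.le]
            rw [hPdef]
            norm_num
            congr 1
            ring
          rw [hTr]
          have : (0:ℝ) ≤ (k^2*(r:ℝ)/m)^((r:ℝ)/2) := Real.rpow_nonneg (by positivity) _
          exact mul_le_mul_of_nonneg_right (Real.exp_le_exp.mpr (by linarith)) this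
  · -- Case 2 : k^2 < m*r
    intro hcase
    rw [hC2]
    set x := (m:ℝ) * r / k^2 with hxdef
    have hx1 : 1 < x := (one_lt_div (by positivity)).mpr hcase
    have hx0 : 0 < x := lt_trans one_pos hx1
    set L := Real.log (Real.exp 1 * m * r / k^2) with hLdef
    have hLx : L = 1 + Real.log x := by
      rw [hLdef, show Real.exp 1 * (m:ℝ) * r / k^2 = Real.exp 1 * x by rw [hxdef]; ring,
        Real.log_mul (Real.exp_ne_zero 1) (ne_of_gt hx0), Real.log_exp]
    have hL1 : 1 ≤ L := by
      rw [hLx]; linarith [Real.log_pos hx1]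
    have hL0 : 0 < L := lt_of_lt_of_le one_pos hL1
    have hone : (1:ℝ) ≤ Real.exp (20*r) := Real.one_le_exp (by positivity)
    by_cases hab : (α:ℝ) - β ≤ ((α:ℝ) - 2*β)^2
    · -- subcase 2a : N ≤ M
      have hNM : Nfun m r k α β ≤ Mfun m r k α β := by
        unfold Nfun Mfun
        apply mul_le_mul_of_nonneg_left _ (by positivity)
        calc ((α:ℝ) - β)^(r-α) ≤ (((α:ℝ) - 2*β)^2)^(r-α) :=
              pow_le_pow_left₀ hABnn hab _
          _ = ((α:ℝ) - 2*β)^(2*r - 2*α) := by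
              rw [← pow_mul, show 2*(r-α) = 2*r - 2*α from by omega]
      have hM0 : 0 ≤ Mfun m r k α β := by
        unfold Mfun
        exact mul_nonneg (mul_nonneg (by positivity) (by positivity)) (pow_nonneg hA2Bnn _)
      calc Nfun m r k α β ≤ Mfun m r k α β := hNM
        _ ≤ max (Mfun m r k α β) (((r:ℝ)/L)^r) := le_max_left _ _
        _ ≤ Real.exp (20*r) * max (Mfun m r k α β) (((r:ℝ)/L)^r) := by
            apply le_mul_of_one_le_left _ hone
            exact le_trans hM0 (le_max_left _ _)
    · -- subcase 2b
      push_neg at hab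
      have hα3β : α ≤ 3*β := by
        have h1 : ((α - 2*β : ℕ):ℝ) = (α:ℝ) - 2*β := by
          rw [Nat.cast_sub h2β]; push_cast; ring
        have h2 : ((α - 2*β : ℕ):ℝ)^2 < ((α - 2*β : ℕ):ℝ) + β := by
          rw [h1]; nlinarith
        have h3 : (α - 2*β)^2 < (α - 2*β) + β := by exact_mod_cast h2
        nlinarith [h3, Nat.sub_add_cancel h2β]
      -- main estimate : N ≤ exp(20r) * (r/L)^r
      have hRL0 : 0 < (r:ℝ)/L := by positivity
      have key : Nfun m r k α β ≤ Real.exp (20*r) * ((r:ℝ)/L)^r := by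
        have hZ0 : 0 ≤ Real.exp (20*r) * ((r:ℝ)/L)^r := by positivity
        have hsq : (Nfun m r k α β)^2 ≤ (Real.exp (20*r) * ((r:ℝ)/L)^r)^2 := by
          have e0 : (Nfun m r k α β)^2
              = ((m:ℝ)/β)^(2*β) * (k*α/m)^(2*α) * ((α:ℝ)-β)^(2*(r-α)) := by
            unfold Nfun; ring
          have e9 : (Real.exp (20*r) * ((r:ℝ)/L)^r)^2
              = Real.exp (40*r) * ((r:ℝ)/L)^(2*r) := by
            rw [mul_pow, ← pow_mul, ← Real.exp_nat_mul,
              show (r*2) = 2*r from by ring, show ((2:ℕ):ℝ) * (20*(r:ℝ)) = 40*r from by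
                push_cast; ring]
          rw [e0, e9]
          have h3βR : (α:ℝ) ≤ 3*β := by exact_mod_cast hα3β
          have h1a : (m:ℝ)/β ≤ 3*(m:ℝ)/α := by
            rw [div_le_div_iff₀ hβ0 hα0]; nlinarith
          have h1 : ((m:ℝ)/β)^(2*β) ≤ (3*(m:ℝ)/α)^α :=
            le_trans (pow_le_pow_left₀ (by positivity) h1a _)
              (pow_le_pow_right₀ ((one_le_div hα0).mpr (by linarith)) (by omega))
          have h2 : ((α:ℝ)-β)^(2*(r-α)) ≤ (α:ℝ)^(2*(r-α)) :=
            pow_le_pow_left₀ hABnn (by linarith) _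
          have hLpow : L^(2*r) ≤ ((2*(r:ℝ))/α)^(2*r) * Real.exp ((α:ℝ) * L) :=
            aux_logpow r hr L α hL0 hα0
          have hexpAL : Real.exp ((α:ℝ)*L) = (Real.exp 1 * x)^α := by
            rw [hLx, show (α:ℝ)*(1+Real.log x) = (α:ℝ)*1 + (α:ℝ)*Real.log x from by ring,
              Real.exp_add, Real.exp_nat_mul, Real.exp_nat_mul, Real.exp_log hx0, mul_pow]
          have h3e : 3*Real.exp 1 ≤ Real.exp 3 := by
            have he3 : Real.exp 3 = Real.exp 1^3 := by
              rw [← Real.exp_nat_mul]; norm_num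
            have he1 : (2:ℝ) ≤ Real.exp 1 := by linarith [Real.exp_one_gt_d9]
            nlinarith [mul_le_mul he1 he1 (by norm_num) (Real.exp_pos 1).le,
              Real.exp_pos 1, he1]
          have b1 : (3*Real.exp 1)^α ≤ Real.exp (3*(r:ℝ)) := by
            calc (3*Real.exp 1)^α ≤ (Real.exp 3)^α := pow_le_pow_left₀ (by positivity) h3e _
              _ = Real.exp ((α:ℝ)*3) := (Real.exp_nat_mul 3 α).symm
              _ ≤ Real.exp (3*(r:ℝ)) := Real.exp_le_exp.mpr (by linarith)
          have b2 : ((r:ℝ)/α)^α ≤ Real.exp (r:ℝ) := aux_pow_le_exp α hα1 r hαR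
          have b3 : (2:ℝ)^(2*r) ≤ Real.exp (2*(r:ℝ)) := by
            have h2e : (2:ℝ) ≤ Real.exp 1 := by linarith [Real.exp_one_gt_d9]
            calc (2:ℝ)^(2*r) ≤ (Real.exp 1)^(2*r) := pow_le_pow_left₀ (by norm_num) h2e _
              _ = Real.exp ((2*r:ℕ)*1) := (Real.exp_nat_mul 1 (2*r)).symm
              _ = Real.exp (2*(r:ℝ)) := by congr 1; push_cast; ring
          calc ((m:ℝ)/β)^(2*β) * (k*α/m)^(2*α) * ((α:ℝ)-β)^(2*(r-α))
              ≤ (3*(m:ℝ)/α)^α * (k*α/m)^(2*α) * (α:ℝ)^(2*(r-α)) :=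
                mul_le_mul (mul_le_mul h1 le_rfl (by positivity) (by positivity)) h2
                  (pow_nonneg hABnn _) (by positivity)
            _ = (3*k^2*(α:ℝ)/m)^α * (α:ℝ)^(2*(r-α)) := by
                rw [pow_mul (k*(α:ℝ)/m) 2 α, ← mul_pow]
                congr 2
                field_simp
            _ ≤ Real.exp (40*(r:ℝ)) * ((r:ℝ)/L)^(2*r) := by
                rw [div_pow (r:ℝ) L (2*r), ← mul_div_assoc, le_div_iff₀ (by positivity)]
                calc (3*k^2*(α:ℝ)/m)^α * (α:ℝ)^(2*(r-α)) * L^(2*r)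
                    ≤ (3*k^2*(α:ℝ)/m)^α * (α:ℝ)^(2*(r-α)) *
                        (((2*(r:ℝ))/α)^(2*r) * (Real.exp 1 * x)^α) := by
                      apply mul_le_mul_of_nonneg_left _ (by positivity)
                      rw [← hexpAL]; exact hLpow
                  _ = ((3*k^2*(α:ℝ)/m) * (Real.exp 1 * x))^α * (α:ℝ)^(2*(r-α)) *
                        ((2*(r:ℝ))/α)^(2*r) := by
                      rw [mul_pow]; ring
                  _ = (3*Real.exp 1*(α:ℝ)*(r:ℝ))^α * (α:ℝ)^(2*(r-α)) *
                        ((2*(r:ℝ))/α)^(2*r) := by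
                      congr 3
                      rw [hxdef]; field_simp
                  _ = ((3*Real.exp 1)^α * ((r:ℝ)/α)^α * 2^(2*r)) * (r:ℝ)^(2*r) := by
                      obtain ⟨n, rfl⟩ : ∃ n, r = α + n := ⟨r - α, by omega⟩
                      simp only [Nat.add_sub_cancel_left]
                      rw [show (3*Real.exp 1*(α:ℝ)*((α+n:ℕ):ℝ))
                          = (3*Real.exp 1)*((α:ℝ)*((α+n:ℕ):ℝ)) from by ring]
                      rw [mul_pow (3*Real.exp 1), mul_pow ((α:ℝ)), div_pow, div_pow,
                        mul_pow (2:ℝ)]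
                      rw [div_eq_mul_inv, div_eq_mul_inv]
                      field_simp
                      ring
                  _ ≤ ((Real.exp (3*(r:ℝ)) * Real.exp ((r:ℝ))) * Real.exp (2*(r:ℝ)))
                        * (r:ℝ)^(2*r) := by
                      apply mul_le_mul_of_nonneg_right _ (by positivity)
                      exact mul_le_mul (mul_le_mul b1 b2 (by positivity) (by positivity))
                        b3 (by positivity) (by positivity)
                  _ ≤ Real.exp (40*(r:ℝ)) * (r:ℝ)^(2*r) := by
                      apply mul_le_mul_of_nonneg_right _ (by positivity)
                      rw [← Real.exp_add, ← Real.exp_add]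
                      exact Real.exp_le_exp.mpr (by linarith)

        calc Nfun m r k α β = Real.sqrt ((Nfun m r k α β)^2) := (Real.sqrt_sq hNnn).symm
          _ ≤ Real.sqrt ((Real.exp (20*r) * ((r:ℝ)/L)^r)^2) := Real.sqrt_le_sqrt hsq
          _ = Real.exp (20*r) * ((r:ℝ)/L)^r := Real.sqrt_sq hZ0
      calc Nfun m r k α β ≤ Real.exp (20*r) * ((r:ℝ)/L)^r := key
        _ ≤ Real.exp (20*r) * max (Mfun m r k α β) (((r:ℝ)/L)^r) := by
            exact mul_le_mul_of_nonneg_left (le_max_right _ _) (by positivity)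

end FH
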